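/- For a finite subset X of Euclidean space ℝⁿ, the similarity matrix ζ_X defined by ζ_X(i,j) = exp(-‖x_i - x_j‖) is symmetric positive definite; in particular it is invertible. -/

import Mathlib

open Matrix Real

section SimilarityAux
open MeasureTheory Finset Real Set Filter


lemma inner_pow_sum_nonneg {n m : ℕ} (y : Fin m → EuclideanSpace ℝ (Fin n))
    (b : Fin m → ℝ) (k : ℕ) :
    0 ≤ ∑ i, ∑ j, b i * b j * (inner ℝ (y i) (y j) : ℝ) ^ k := by
  have hinner : ∀ i j, (inner ℝ (y i) (y j) : ℝ) ^ k
      = ∑ p : Fin k → Fin n, ∏ l, y i (p l) * y j (p l) := by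
    intro i j
    rw [PiLp.inner_apply]
    simp only [RCLike.inner_apply, starRingEnd_apply, star_trivial]
    rw [Finset.sum_congr rfl fun l _ => mul_comm ((y j) l) ((y i) l)]
    exact Fintype.sum_pow _ k
  calc (0:ℝ) ≤ ∑ p : Fin k → Fin n, (∑ i, b i * ∏ l, y i (p l)) ^ 2 :=
        Finset.sum_nonneg fun p _ => sq_nonneg _
    _ = ∑ p : Fin k → Fin n, ∑ i, ∑ j,
          (b i * ∏ l, y i (p l)) * (b j * ∏ l, y j (p l)) := by
        refine Finset.sum_congr rfl fun p _ => ?_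
        rw [sq, Finset.sum_mul_sum]
    _ = ∑ i, ∑ j, ∑ p : Fin k → Fin n,
          (b i * ∏ l, y i (p l)) * (b j * ∏ l, y j (p l)) := by
        rw [Finset.sum_comm]
        exact Finset.sum_congr rfl fun i _ => Finset.sum_comm
    _ = ∑ i, ∑ j, b i * b j * (inner ℝ (y i) (y j) : ℝ) ^ k := by
        refine Finset.sum_congr rfl fun i _ => Finset.sum_congr rfl fun j _ => ?_
        rw [hinner, Finset.mul_sum]
        refine Finset.sum_congr rfl fun p _ => ?_
        rw [Finset.prod_mul_distrib]
        ring



lemma real_exp_tsum (z : ℝ) : Real.exp z = ∑' k : ℕ, z ^ k / k.factorial := by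
  rw [Real.exp_eq_exp_ℝ, NormedSpace.exp_eq_tsum ℝ]
  simp [smul_eq_mul, div_eq_inv_mul]

lemma gauss_sum_nonneg {n m : ℕ} (y : Fin m → EuclideanSpace ℝ (Fin n)) (c : Fin m → ℝ)
    {u : ℝ} (hu : 0 ≤ u) :
    0 ≤ ∑ i, ∑ j, c i * c j * Real.exp (-(u * ‖y i - y j‖ ^ 2)) := by
  set b : Fin m → ℝ := fun i => c i * Real.exp (-(u * ‖y i‖ ^ 2)) with hb
  have hexp : ∀ i j, c i * c j * Real.exp (-(u * ‖y i - y j‖ ^ 2))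
      = b i * b j * Real.exp (2 * u * (inner ℝ (y i) (y j) : ℝ)) := by
    intro i j
    have h : -(u * ‖y i - y j‖ ^ 2) = -(u * ‖y i‖ ^ 2) + -(u * ‖y j‖ ^ 2)
        + 2 * u * (inner ℝ (y i) (y j) : ℝ) := by
      rw [norm_sub_sq_real]; ring
    rw [h, Real.exp_add, Real.exp_add, hb]; ring
  have hsum : ∀ i j : Fin m, Summable fun k : ℕ =>
      b i * b j * ((2 * u * (inner ℝ (y i) (y j) : ℝ)) ^ k / k.factorial) :=
    fun i j => (Real.summable_pow_div_factorial _).mul_left _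
  calc (0:ℝ) ≤ ∑' k : ℕ, ∑ i, ∑ j,
        b i * b j * ((2 * u * (inner ℝ (y i) (y j) : ℝ)) ^ k / k.factorial) := by
        refine tsum_nonneg fun k => ?_
        have : ∀ i j : Fin m, b i * b j * ((2 * u * (inner ℝ (y i) (y j) : ℝ)) ^ k / k.factorial)
            = ((2 * u) ^ k / k.factorial) * (b i * b j * (inner ℝ (y i) (y j) : ℝ) ^ k) := by
          intro i j; rw [mul_pow]; ring
        simp only [this, ← Finset.mul_sum]
        exact mul_nonneg (div_nonneg (pow_nonneg (by linarith) _) (Nat.cast_nonneg _))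
          (inner_pow_sum_nonneg y b k)
    _ = ∑ i, ∑ j, ∑' k : ℕ,
        b i * b j * ((2 * u * (inner ℝ (y i) (y j) : ℝ)) ^ k / k.factorial) := by
        rw [Summable.tsum_finsetSum fun i _ => summable_sum fun j _ => hsum i j]
        exact Finset.sum_congr rfl fun i _ => Summable.tsum_finsetSum fun j _ => hsum i j
    _ = ∑ i, ∑ j, c i * c j * Real.exp (-(u * ‖y i - y j‖ ^ 2)) := by
        refine Finset.sum_congr rfl fun i _ => Finset.sum_congr rfl fun j _ => ?_
        rw [hexp i j, real_exp_tsum, tsum_mul_left]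


lemma intJ {b : ℝ} (hb : 0 ≤ b) :
    IntegrableOn (fun x : ℝ => Real.exp (-(x - b / x) ^ 2)) (Ioi 0) := by
  have hcont : ContinuousOn (fun x : ℝ => Real.exp (-(x - b / x) ^ 2)) (Ioi 0) :=
    Real.continuous_exp.comp_continuousOn <| (ContinuousOn.pow
      (continuousOn_id.sub (continuousOn_const.div continuousOn_id fun x hx => ne_of_gt hx)) 2).neg
  refine Integrable.mono' (g := fun x => Real.exp (2 * b) * Real.exp (-1 * x ^ 2))
    (((integrable_exp_neg_mul_sq one_pos).const_mul _).restrict)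
    (hcont.aestronglyMeasurable measurableSet_Ioi) ?_
  filter_upwards [ae_restrict_mem measurableSet_Ioi] with x hx
  rw [Real.norm_eq_abs, abs_of_pos (Real.exp_pos _), ← Real.exp_add]
  apply Real.exp_le_exp.2
  have hx0 : (0:ℝ) < x := hx
  have h1 : (x - b / x) ^ 2 = x ^ 2 - 2 * b + (b / x) ^ 2 := by
    field_simp; ring
  nlinarith [sq_nonneg (b / x)]


lemma imageA {b : ℝ} (hb : 0 < b) : (fun x : ℝ => x - b / x) '' (Ioi 0) = univ := by
  refine eq_univ_of_forall fun y => ?_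
  set s := Real.sqrt (y ^ 2 + 4 * b) with hs
  have hs2 : s ^ 2 = y ^ 2 + 4 * b := Real.sq_sqrt (by nlinarith [sq_nonneg y])
  have hsy : |y| < s := by
    rw [hs, ← Real.sqrt_sq_eq_abs]
    exact Real.sqrt_lt_sqrt (sq_nonneg y) (by linarith)
  have hx0 : 0 < (y + s) / 2 := by
    have := neg_abs_le y; linarith [abs_nonneg y]
  refine ⟨(y + s) / 2, hx0, ?_⟩
  have hne : (y + s) / 2 ≠ 0 := ne_of_gt hx0
  have hys : (0:ℝ) < y + s := by linarith
  have hne2 : y + s ≠ 0 := ne_of_gt hys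
  have h2 : ((y + s) / 2) - b / ((y + s) / 2) = y := by
    field_simp
    nlinarith [hs2]
  exact h2

lemma injA {b : ℝ} (hb : 0 < b) : Set.InjOn (fun x : ℝ => x - b / x) (Ioi 0) := by
  intro x hx y hy h
  simp only [Set.mem_Ioi] at hx hy
  by_contra hne
  rcases lt_or_gt_of_ne hne with hlt | hlt
  · have : x - b / x < y - b / y :=
      sub_lt_sub (by linarith : x < y) (div_lt_div_of_pos_left hb hx hlt)
    simp only [h] at this; exact lt_irrefl _ this
  · have : y - b / y < x - b / x :=
      sub_lt_sub (by linarith : y < x) (div_lt_div_of_pos_left hb hy hlt)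
    simp only [h] at this; exact lt_irrefl _ this

lemma derivA {b : ℝ} (x : ℝ) (hx : x ∈ Ioi (0:ℝ)) :
    HasDerivWithinAt (fun x : ℝ => x - b / x) (1 + b / x ^ 2) (Ioi 0) x := by
  have hx0 : x ≠ 0 := ne_of_gt hx
  have h : HasDerivAt (fun x : ℝ => x - b / x) (1 - b * -(x ^ 2)⁻¹) x := by
    simpa [div_eq_mul_inv] using
      (hasDerivAt_id' x).fun_sub ((hasDerivAt_inv hx0).const_mul b)
  have : 1 - b * -(x ^ 2)⁻¹ = 1 + b / x ^ 2 := by field_simp; ring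
  exact (this ▸ h).hasDerivWithinAt

lemma glasserA {b : ℝ} (hb : 0 < b) :
    ∫ x in Ioi (0:ℝ), |1 + b / x ^ 2| * Real.exp (-(x - b / x) ^ 2) = Real.sqrt π := by
  have := integral_image_eq_integral_abs_deriv_smul measurableSet_Ioi
    (derivA (b := b)) (injA hb) (fun y => Real.exp (-y ^ 2))
  rw [imageA hb] at this
  simp only [smul_eq_mul] at this
  rw [← this, Measure.restrict_univ]
  simpa using integral_gaussian 1




lemma imageB {b : ℝ} (hb : 0 < b) : (fun x : ℝ => b / x) '' (Ioi (0:ℝ)) = Ioi (0:ℝ) := by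
  ext y
  constructor
  · rintro ⟨x, hx, rfl⟩; exact div_pos hb hx
  · intro hy; exact ⟨b / y, div_pos hb hy, by field_simp⟩

lemma injB {b : ℝ} (hb : 0 < b) : Set.InjOn (fun x : ℝ => b / x) (Ioi 0) := by
  intro x hx y hy h
  simp only [Set.mem_Ioi] at hx hy
  field_simp at h
  nlinarith [h, hb]

lemma derivB {b : ℝ} (x : ℝ) (hx : x ∈ Ioi (0:ℝ)) :
    HasDerivWithinAt (fun x : ℝ => b / x) (-(b / x ^ 2)) (Ioi 0) x := by
  have hx0 : x ≠ 0 := ne_of_gt hx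
  have h : HasDerivAt (fun x : ℝ => b / x) (b * -(x ^ 2)⁻¹) x := by
    simpa [div_eq_mul_inv] using (hasDerivAt_inv hx0).const_mul b
  have : b * -(x ^ 2)⁻¹ = -(b / x ^ 2) := by field_simp
  exact (this ▸ h).hasDerivWithinAt

lemma ptB {b : ℝ} (hb : 0 < b) {x : ℝ} (hx : x ∈ Ioi (0:ℝ)) :
    |(-(b / x ^ 2))| • Real.exp (-(b / x - b / (b / x)) ^ 2)
      = b / x ^ 2 * Real.exp (-(x - b / x) ^ 2) := by
  have hx0 : (0:ℝ) < x := hx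
  have h1 : b / (b / x) = x := by field_simp
  have h2 : |(-(b / x ^ 2))| = b / x ^ 2 := by
    rw [abs_neg, abs_of_pos (div_pos hb (pow_pos hx0 2))]
  rw [h1, h2, smul_eq_mul]
  congr 1
  rw [← neg_sub x (b / x), neg_sq]

lemma intK {b : ℝ} (hb : 0 < b) :
    IntegrableOn (fun x : ℝ => b / x ^ 2 * Real.exp (-(x - b / x) ^ 2)) (Ioi 0) := by
  have h2 := (integrableOn_image_iff_integrableOn_abs_deriv_smul measurableSet_Ioi
    (derivB (b := b)) (injB hb) (fun y => Real.exp (-(y - b / y) ^ 2))).1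
    (by rw [imageB hb]; exact intJ hb.le)
  exact h2.congr_fun (fun x hx => ptB hb hx) measurableSet_Ioi

lemma glasserB {b : ℝ} (hb : 0 < b) :
    ∫ x in Ioi (0:ℝ), b / x ^ 2 * Real.exp (-(x - b / x) ^ 2)
      = ∫ x in Ioi (0:ℝ), Real.exp (-(x - b / x) ^ 2) := by
  have h := integral_image_eq_integral_abs_deriv_smul measurableSet_Ioi
    (derivB (b := b)) (injB hb) (fun y => Real.exp (-(y - b / y) ^ 2))
  rw [imageB hb] at h
  calc ∫ x in Ioi (0:ℝ), b / x ^ 2 * Real.exp (-(x - b / x) ^ 2)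
      = ∫ x in Ioi (0:ℝ), |(-(b / x ^ 2))| • Real.exp (-(b / x - b / (b / x)) ^ 2) :=
        setIntegral_congr_fun measurableSet_Ioi (fun x hx => (ptB hb hx).symm)
    _ = ∫ x in Ioi (0:ℝ), Real.exp (-(x - b / x) ^ 2) := h.symm

lemma Jval {b : ℝ} (hb : 0 ≤ b) :
    ∫ x in Ioi (0:ℝ), Real.exp (-(x - b / x) ^ 2) = Real.sqrt π / 2 := by
  rcases eq_or_lt_of_le hb with rfl | hb
  · simp only [zero_div, sub_zero]
    simpa using integral_gaussian_Ioi 1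
  · have hsplit : ∫ x in Ioi (0:ℝ), |1 + b / x ^ 2| * Real.exp (-(x - b / x) ^ 2)
        = (∫ x in Ioi (0:ℝ), Real.exp (-(x - b / x) ^ 2))
          + ∫ x in Ioi (0:ℝ), b / x ^ 2 * Real.exp (-(x - b / x) ^ 2) := by
      rw [← integral_add (intJ hb.le) (intK hb)]
      refine setIntegral_congr_fun measurableSet_Ioi (fun x hx => ?_)
      have hx0 : (0:ℝ) < x := hx
      rw [abs_of_pos (by positivity : (0:ℝ) < 1 + b / x ^ 2)]
      ring
    rw [glasserA hb, glasserB hb] at hsplit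
    linarith



lemma imageC : (fun x : ℝ => (4 * x ^ 2)⁻¹) '' (Ioi (0:ℝ)) = Ioi (0:ℝ) := by
  ext u
  constructor
  · rintro ⟨x, hx, rfl⟩
    have hx0 : (0:ℝ) < x := hx
    exact mem_Ioi.2 (by positivity)
  · intro hu
    have hu0 : (0:ℝ) < u := hu
    refine ⟨(2 * Real.sqrt u)⁻¹, mem_Ioi.2 (by positivity), ?_⟩
    have h : Real.sqrt u ^ 2 = u := Real.sq_sqrt hu0.le
    have hsne : Real.sqrt u ≠ 0 := by positivity
    field_simp
    nlinarith [h]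

lemma injC : Set.InjOn (fun x : ℝ => (4 * x ^ 2)⁻¹) (Ioi (0:ℝ)) := by
  intro x hx y hy h
  have hx0 : (0:ℝ) < x := hx
  have hy0 : (0:ℝ) < y := hy
  field_simp at h
  nlinarith [h]

lemma derivC (x : ℝ) (hx : x ∈ Ioi (0:ℝ)) :
    HasDerivWithinAt (fun x : ℝ => (4 * x ^ 2)⁻¹) (-(2 * x ^ 3)⁻¹) (Ioi 0) x := by
  have hx0 : (0:ℝ) < x := hx
  have h := ((hasDerivAt_pow 2 x).const_mul 4).fun_inv
    (by positivity : (4:ℝ) * x ^ 2 ≠ 0)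
  refine HasDerivAt.hasDerivWithinAt ?_
  refine h.congr_deriv ?_
  field_simp
  ring

lemma ptC {s : ℝ} (hs : 0 ≤ s) {x : ℝ} (hx : x ∈ Ioi (0:ℝ)) :
    |(-(2 * x ^ 3)⁻¹)| • (((4 * x ^ 2)⁻¹ * Real.sqrt ((4 * x ^ 2)⁻¹))⁻¹
        * Real.exp (-(4 * (4 * x ^ 2)⁻¹)⁻¹ - s ^ 2 * (4 * x ^ 2)⁻¹))
      = 4 * Real.exp (-s) * Real.exp (-(x - s / 2 / x) ^ 2) := by
  have hx0 : (0:ℝ) < x := hx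
  have hsq : Real.sqrt ((4 * x ^ 2)⁻¹) = (2 * x)⁻¹ := by
    rw [show (4 * x ^ 2)⁻¹ = ((2 * x)⁻¹) ^ 2 by rw [inv_pow]; congr 1; ring]
    exact Real.sqrt_sq (by positivity)
  have habs : |(-(2 * x ^ 3)⁻¹)| = (2 * x ^ 3)⁻¹ := by
    rw [abs_neg, abs_of_pos (by positivity)]
  rw [hsq, habs, smul_eq_mul]
  have harg : -(4 * (4 * x ^ 2)⁻¹)⁻¹ - s ^ 2 * (4 * x ^ 2)⁻¹
      = -s + -(x - s / 2 / x) ^ 2 := by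
    field_simp
    ring
  rw [harg, Real.exp_add]
  have hcoeff : (2 * x ^ 3)⁻¹ * ((4 * x ^ 2)⁻¹ * (2 * x)⁻¹)⁻¹ = 4 := by
    field_simp
  calc (2 * x ^ 3)⁻¹ * (((4 * x ^ 2)⁻¹ * (2 * x)⁻¹)⁻¹ * (Real.exp (-s) * Real.exp (-(x - s / 2 / x) ^ 2)))
      = ((2 * x ^ 3)⁻¹ * ((4 * x ^ 2)⁻¹ * (2 * x)⁻¹)⁻¹) * (Real.exp (-s) * Real.exp (-(x - s / 2 / x) ^ 2)) := by ring
    _ = 4 * Real.exp (-s) * Real.exp (-(x - s / 2 / x) ^ 2) := by rw [hcoeff]; ring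

lemma Cint {s : ℝ} (hs : 0 ≤ s) :
    IntegrableOn (fun u : ℝ => (u * Real.sqrt u)⁻¹ * Real.exp (-(4 * u)⁻¹ - s ^ 2 * u))
      (Ioi 0) := by
  have h := (integrableOn_image_iff_integrableOn_abs_deriv_smul measurableSet_Ioi
    derivC injC
    (fun u => (u * Real.sqrt u)⁻¹ * Real.exp (-(4 * u)⁻¹ - s ^ 2 * u))).2 ?_
  · rwa [imageC] at h
  · have : IntegrableOn (fun x : ℝ => 4 * Real.exp (-s) * Real.exp (-(x - s / 2 / x) ^ 2))
        (Ioi 0) := (intJ (by positivity : (0:ℝ) ≤ s / 2)).const_mul _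
    exact this.congr_fun (fun x hx => (ptC hs hx).symm) measurableSet_Ioi

lemma Cval {s : ℝ} (hs : 0 ≤ s) :
    ∫ u in Ioi (0:ℝ), (u * Real.sqrt u)⁻¹ * Real.exp (-(4 * u)⁻¹ - s ^ 2 * u)
      = 2 * Real.sqrt π * Real.exp (-s) := by
  have h := integral_image_eq_integral_abs_deriv_smul measurableSet_Ioi
    derivC injC (fun u => (u * Real.sqrt u)⁻¹ * Real.exp (-(4 * u)⁻¹ - s ^ 2 * u))
  rw [imageC] at h
  rw [h]
  rw [setIntegral_congr_fun measurableSet_Ioi (fun x hx => ptC hs hx)]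
  rw [integral_const_mul, Jval (by positivity : (0:ℝ) ≤ s / 2)]
  ring



lemma key_pos {n m : ℕ} (x : Fin m → EuclideanSpace ℝ (Fin n)) (hx : Function.Injective x)
    (c : Fin m → ℝ) (hc : c ≠ 0) :
    0 < ∑ i, ∑ j, c i * c j * Real.exp (-‖x i - x j‖) := by
  set w : Fin m → Fin m → ℝ → ℝ := fun i j u =>
    c i * c j * ((u * Real.sqrt u)⁻¹ * Real.exp (-(4 * u)⁻¹ - ‖x i - x j‖ ^ 2 * u)) with hw
  have hwint : ∀ i j, IntegrableOn (w i j) (Ioi 0) :=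
    fun i j => (Cint (norm_nonneg _)).const_mul _
  set F : ℝ → ℝ := fun u => ∑ i, ∑ j, w i j u with hF
  have hFint : IntegrableOn F (Ioi 0) :=
    integrable_finset_sum _ fun i _ => integrable_finset_sum _ fun j _ => hwint i j
  have hrepr : ∑ i, ∑ j, c i * c j * Real.exp (-‖x i - x j‖)
      = (2 * Real.sqrt π)⁻¹ * ∫ u in Ioi (0:ℝ), F u := by
    have hπ : (2 * Real.sqrt π) ≠ 0 := by positivity
    rw [hF, integral_finset_sum _ fun i _ => integrable_finset_sum _ fun j _ => hwint i j,
      Finset.mul_sum]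
    refine Finset.sum_congr rfl fun i _ => ?_
    rw [integral_finset_sum _ fun j _ => hwint i j, Finset.mul_sum]
    refine Finset.sum_congr rfl fun j _ => ?_
    rw [hw]
    simp only []
    rw [MeasureTheory.integral_const_mul, Cval (norm_nonneg (x i - x j))]
    field_simp
  set G : ℝ → ℝ := fun u => ∑ i, ∑ j, c i * c j * Real.exp (-(u * ‖x i - x j‖ ^ 2)) with hG
  have hFG : ∀ u ∈ Ioi (0:ℝ), F u = ((u * Real.sqrt u)⁻¹ * Real.exp (-(4 * u)⁻¹)) * G u := by
    intro u hu
    have hsplit : ∀ i j : Fin m, w i j u = ((u * Real.sqrt u)⁻¹ * Real.exp (-(4 * u)⁻¹))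
        * (c i * c j * Real.exp (-(u * ‖x i - x j‖ ^ 2))) := by
      intro i j
      rw [hw]
      simp only []
      rw [show -(4 * u)⁻¹ - ‖x i - x j‖ ^ 2 * u = -(4 * u)⁻¹ + -(u * ‖x i - x j‖ ^ 2) by ring,
        Real.exp_add]
      ring
    rw [hF, hG]
    simp only [hsplit, ← Finset.mul_sum]
  have hFnn : ∀ u ∈ Ioi (0:ℝ), 0 ≤ F u := by
    intro u hu
    have hu0 : (0:ℝ) < u := hu
    rw [hFG u hu]
    exact mul_nonneg (by positivity) (gauss_sum_nonneg x c hu0.le)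
  have hS : 0 < ∑ i, c i * c i := by
    obtain ⟨i0, hi0⟩ := Function.ne_iff.1 hc
    exact Finset.sum_pos' (fun i _ => mul_self_nonneg _)
      ⟨i0, Finset.mem_univ _, mul_self_pos.2 hi0⟩
  have hGlim : Tendsto G atTop (nhds (∑ i, c i * c i)) := by
    have : (∑ i, c i * c i) = ∑ i, ∑ j, (if i = j then c i * c i else 0) := by
      simp
    rw [hG, this]
    refine tendsto_finset_sum _ fun i _ => tendsto_finset_sum _ fun j _ => ?_
    by_cases hij : i = j
    · subst hij
      simp only [if_pos rfl, sub_self, norm_zero]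
      simpa using (tendsto_const_nhds :
        Tendsto (fun _ : ℝ => c i * c i) atTop (nhds (c i * c i)))
    · simp only [if_neg hij]
      have ha : (0:ℝ) < ‖x i - x j‖ ^ 2 := by
        have h3 : x i ≠ x j := fun h => hij (hx h)
        exact pow_pos (norm_pos_iff.2 (sub_ne_zero.2 h3)) 2
      have h1 : Tendsto (fun u : ℝ => -(u * ‖x i - x j‖ ^ 2)) atTop atBot :=
        tendsto_neg_atBot_iff.2 (Tendsto.atTop_mul_const ha tendsto_id)
      have h2 : Tendsto (fun u : ℝ => Real.exp (-(u * ‖x i - x j‖ ^ 2))) atTop (nhds 0) :=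
        Real.tendsto_exp_atBot.comp h1
      simpa using h2.const_mul (c i * c j)
  have heven : ∀ᶠ u in atTop, (∑ i, c i * c i) / 2 < G u :=
    hGlim.eventually (eventually_gt_nhds (by linarith))
  obtain ⟨u₀, hu₀⟩ := eventually_atTop.1 heven
  set v : ℝ := max u₀ 1 with hv
  have hsub : Ioi v ⊆ Function.support F ∩ Ioi 0 := by
    intro u hu
    have huv : v < u := hu
    have hu0 : (0:ℝ) < u :=
      lt_trans (lt_of_lt_of_le one_pos (le_max_right u₀ 1)) huv
    have hGu : (∑ i, c i * c i) / 2 < G u :=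
      hu₀ u (le_of_lt (lt_of_le_of_lt (le_max_left u₀ 1) huv))
    have hFu : 0 < F u := by
      rw [hFG u hu0]
      have h1 : 0 < (u * Real.sqrt u)⁻¹ * Real.exp (-(4 * u)⁻¹) := by positivity
      exact mul_pos h1 (lt_trans (by linarith) hGu)
    exact ⟨ne_of_gt hFu, hu0⟩
  have hmeas : 0 < volume (Function.support F ∩ Ioi 0) := by
    refine lt_of_lt_of_le ?_ (measure_mono hsub)
    rw [Real.volume_Ioi]
    exact ENNReal.zero_lt_top
  have hIpos : 0 < ∫ u in Ioi (0:ℝ), F u := by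
    refine (setIntegral_pos_iff_support_of_nonneg_ae ?_ hFint).2 hmeas
    filter_upwards [ae_restrict_mem measurableSet_Ioi] with u hu
    exact hFnn u hu
  rw [hrepr]
  exact mul_pos (inv_pos.2 (by positivity)) hIpos




end SimilarityAux

/-- For a finite subset `X = {x 0, ..., x (m-1)}` of Euclidean space ℝⁿ
(distinct points), the similarity matrix `ζ_X (i,j) = exp (-‖x i - x j‖)` is symmetric
positive definite; in particular it is invertible. -/
theorem similarity_matrix_posDef (n m : ℕ) (x : Fin m → EuclideanSpace ℝ (Fin n))
    (hx : Function.Injective x) :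
    (Matrix.of fun i j => Real.exp (-dist (x i) (x j))).IsSymm ∧
    (Matrix.of fun i j => Real.exp (-dist (x i) (x j))).PosDef ∧
    IsUnit (Matrix.of fun i j => Real.exp (-dist (x i) (x j))).det := by
  have hsymm : (Matrix.of fun i j => Real.exp (-dist (x i) (x j))).IsSymm := by
    ext i j
    simp [Matrix.transpose_apply, dist_comm]
  have hpd : (Matrix.of fun i j => Real.exp (-dist (x i) (x j))).PosDef := by
    constructor
    · ext i j
      simp [Matrix.conjTranspose_apply, dist_comm]
    · intro v hv
      have : (v.sum fun i xi => v.sum fun j xj =>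
            star xi * (Matrix.of fun i j => Real.exp (-dist (x i) (x j))) i j * xj)
          = ∑ i, ∑ j, v i * v j * Real.exp (-‖x i - x j‖) := by
        rw [Finsupp.sum_fintype _ _ (by simp)]
        refine Finset.sum_congr rfl fun i _ => ?_
        rw [Finsupp.sum_fintype _ _ (by simp)]
        refine Finset.sum_congr rfl fun j _ => ?_
        simp only [star_trivial, Matrix.of_apply, dist_eq_norm]
        ring
      rw [this]
      exact key_pos x hx v (fun h => hv (Finsupp.ext fun i => by simpa using congrFun h i))
  exact ⟨hsymm, hpd, (Matrix.isUnit_iff_isUnit_det _).1 hpd.isUnit⟩
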